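/- arXiv:2003.01007 — 2 statements merged into one kernel-verified Lean document; each statement's English description precedes it below -/
import Mathlib

section
/- Define polynomials L_k(X) ∈ ℚ[X] by L_1(X) = (X+1)/2 and L_k(X) = Σ_{ν=1}^{k−1} λ_{k,ν} X^ν for k ≥ 2. Then L_2(X) = X, and for every k ≥ 3: L_k(X) = (1/(k−1)) · Σ_{r=1}^{k−1} L_r(X)·L_{k−r}(X). -/
/-- The number of ascents of a permutation `σ` of `Fin m`, i.e. the number of
indices `i` with `i+1 < m` and `σ i < σ (i+1)`. -/
def ascents {m : ℕ} (σ : Equiv.Perm (Fin m)) : ℕ :=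
  (Finset.univ.filter fun i : Fin m =>
    ∃ h : (i : ℕ) + 1 < m, σ i < σ ⟨(i : ℕ) + 1, h⟩).card

/-- `lam k ν` is the proportion of permutations of `{1, …, k-1}` with exactly `ν - 1`
ascents: `λ_{k,ν} = (1/(k-1)!) · #{σ ∈ S_{k-1} : #ascents(σ) = ν-1}`. -/
noncomputable def lam (k ν : ℕ) : ℚ :=
  ((Finset.univ.filter fun σ : Equiv.Perm (Fin (k - 1)) => ascents σ = ν - 1).card : ℚ) /
    ((k - 1).factorial : ℚ)


/-- The polynomials `L_k(X)`: `L_1(X) = (X+1)/2` and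
`L_k(X) = Σ_{ν=1}^{k-1} λ_{k,ν} X^ν` for `k ≥ 2`. -/
noncomputable def Lpoly : ℕ → Polynomial ℚ
  | 1 => Polynomial.C (1 / 2) * (Polynomial.X + 1)
  | k => ∑ ν ∈ Finset.Icc 1 (k - 1), Polynomial.C (lam k ν) * Polynomial.X ^ ν

open Finset Polynomial

namespace LpolyAux

/-- Insert the maximal value `n` at position `p` into the "word" of `τ`. -/
def ins {n : ℕ} (τ : Equiv.Perm (Fin n)) (p : Fin (n+1)) : Equiv.Perm (Fin (n+1)) :=
  (finSuccEquiv' p).trans ((Equiv.optionCongr τ).trans (finSuccEquiv' (Fin.last n)).symm)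

lemma ins_apply_self {n : ℕ} (τ : Equiv.Perm (Fin n)) (p : Fin (n+1)) :
    ins τ p p = Fin.last n := by
  simp [ins]

lemma ins_apply_succAbove {n : ℕ} (τ : Equiv.Perm (Fin n)) (p : Fin (n+1)) (j : Fin n) :
    ins τ p (p.succAbove j) = (τ j).castSucc := by
  simp [ins, ← Fin.succAbove_last]

lemma ins_injective (n : ℕ) :
    Function.Injective (fun q : Equiv.Perm (Fin n) × Fin (n+1) => ins q.1 q.2) := by
  rintro ⟨τ, p⟩ ⟨τ', p'⟩ h
  simp only at h
  have hp : p = p' := by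
    by_contra hne
    obtain ⟨j, hj⟩ := Fin.exists_succAbove_eq hne
    have h1 : ins τ p p = Fin.last n := ins_apply_self ..
    have h2 : ins τ' p' p = (τ' j).castSucc := by
      rw [← hj]; exact ins_apply_succAbove ..
    rw [h] at h1; rw [h1] at h2
    exact absurd h2.symm (Fin.castSucc_lt_last (τ' j)).ne
  subst hp
  have hτ : τ = τ' := by
    ext j
    have := (ins_apply_succAbove τ p j).symm.trans
      ((congrFun (congrArg _ h) (p.succAbove j)).trans (ins_apply_succAbove τ' p j))
    exact congrArg Fin.val (Fin.castSucc_injective _ this)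
  rw [hτ]

lemma ins_bijective (n : ℕ) :
    Function.Bijective (fun q : Equiv.Perm (Fin n) × Fin (n+1) => ins q.1 q.2) := by
  rw [Fintype.bijective_iff_injective_and_card]
  refine ⟨ins_injective n, ?_⟩
  simp [Fintype.card_perm, Nat.factorial_succ, Nat.mul_comm]

lemma sum_perm_succ {M : Type*} [AddCommMonoid M] {n : ℕ}
    (f : Equiv.Perm (Fin (n+1)) → M) :
    ∑ σ : Equiv.Perm (Fin (n+1)), f σ
      = ∑ τ : Equiv.Perm (Fin n), ∑ p : Fin (n+1), f (ins τ p) := by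
  calc ∑ σ : Equiv.Perm (Fin (n+1)), f σ
      = ∑ q : Equiv.Perm (Fin n) × Fin (n+1), f (ins q.1 q.2) :=
        (Fintype.sum_bijective _ (ins_bijective n) _ _ (fun q => rfl)).symm
    _ = _ := Fintype.sum_prod_type _

/-- The word of a permutation, as a function `ℕ → ℕ` (0 outside the range). -/
def wd {m : ℕ} (σ : Equiv.Perm (Fin m)) (i : ℕ) : ℕ :=
  if h : i < m then (σ ⟨i, h⟩ : ℕ) else 0

lemma wd_lt {m : ℕ} (σ : Equiv.Perm (Fin m)) (i : ℕ) (hi : i < m) : wd σ i < m := by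
  rw [wd, dif_pos hi]; exact (σ ⟨i, hi⟩).isLt

lemma ascents_eq_sum {m : ℕ} (σ : Equiv.Perm (Fin m)) :
    ascents σ = ∑ i ∈ range (m - 1), if wd σ i < wd σ (i+1) then 1 else 0 := by
  rw [ascents, Finset.card_filter]
  have key : ∀ i : Fin m,
      (if (∃ h : (i : ℕ) + 1 < m, σ i < σ ⟨(i : ℕ) + 1, h⟩) then 1 else 0)
        = (fun j : ℕ => if j + 1 < m ∧ wd σ j < wd σ (j+1) then 1 else 0) (i : ℕ) := by
    intro i
    by_cases h : (i : ℕ) + 1 < m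
    · simp only [wd, dif_pos h, dif_pos i.isLt, Fin.eta]
      congr 1
      simp only [eq_iff_iff]
      constructor
      · rintro ⟨_, hlt⟩; exact ⟨h, Fin.lt_iff_val_lt_val.mp hlt⟩
      · rintro ⟨_, hlt⟩; exact ⟨h, Fin.lt_iff_val_lt_val.mpr hlt⟩
    · have l : (if ∃ h : (i:ℕ)+1 < m, σ i < σ ⟨(i:ℕ)+1, h⟩ then 1 else 0) = 0 := by
        rw [if_neg]; rintro ⟨h', _⟩; exact h h'
      have r : (if (i:ℕ) + 1 < m ∧ wd σ (i:ℕ) < wd σ ((i:ℕ)+1) then (1:ℕ) else 0) = 0 :=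
        if_neg (fun hc => h hc.1)
      rw [l]; exact r.symm
  rw [Finset.sum_congr rfl (fun i _ => key i),
    Fin.sum_univ_eq_sum_range (fun j : ℕ => if j + 1 < m ∧ wd σ j < wd σ (j+1) then 1 else 0) m]
  rcases m with _ | m'
  · simp
  · rw [Finset.sum_range_succ]
    have hlast : ¬(m' + 1 < m' + 1 ∧ wd σ m' < wd σ (m'+1)) :=
      fun hc => absurd hc.1 (lt_irrefl _)
    rw [if_neg hlast, add_zero, Nat.add_sub_cancel]
    exact Finset.sum_congr rfl fun i hi => by
      simp only [Finset.mem_range] at hi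
      rw [if_congr (and_iff_right (by omega)) rfl rfl]

lemma ascents_le {m : ℕ} (σ : Equiv.Perm (Fin m)) : ascents σ ≤ m - 1 := by
  rw [ascents_eq_sum]
  calc ∑ i ∈ range (m-1), (if wd σ i < wd σ (i+1) then 1 else 0)
      ≤ ∑ _i ∈ range (m-1), 1 := Finset.sum_le_sum (fun i _ => by split <;> omega)
    _ = m - 1 := by simp

lemma wd_ins_self {n : ℕ} (τ : Equiv.Perm (Fin n)) (p : Fin (n+1)) :
    wd (ins τ p) (p : ℕ) = n := by
  rw [wd, dif_pos p.isLt]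
  simp only [Fin.eta]
  rw [ins_apply_self]
  rfl

lemma wd_ins_lt {n : ℕ} (τ : Equiv.Perm (Fin n)) (p : Fin (n+1)) (i : ℕ)
    (hi : i < (p : ℕ)) : wd (ins τ p) i = wd τ i := by
  have hin : i < n := by omega
  have hin1 : i < n + 1 := by omega
  rw [wd, dif_pos hin1, wd, dif_pos hin]
  have hsa : p.succAbove ⟨i, hin⟩ = ⟨i, hin1⟩ := by
    rw [Fin.succAbove_of_castSucc_lt]
    · rfl
    · rw [Fin.lt_iff_val_lt_val]; exact hi
  rw [show (⟨i, hin1⟩ : Fin (n+1)) = p.succAbove ⟨i, hin⟩ from hsa.symm,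
    ins_apply_succAbove]
  rfl

lemma wd_ins_gt {n : ℕ} (τ : Equiv.Perm (Fin n)) (p : Fin (n+1)) (i : ℕ)
    (hpi : (p : ℕ) < i) (hi : i < n + 1) : wd (ins τ p) i = wd τ (i - 1) := by
  have hin : i - 1 < n := by omega
  rw [wd, dif_pos hi, wd, dif_pos hin]
  have hsa : p.succAbove ⟨i - 1, hin⟩ = ⟨i, hi⟩ := by
    rw [Fin.succAbove_of_le_castSucc]
    · ext; simp; omega
    · rw [Fin.le_iff_val_le_val]; simp; omega
  rw [show (⟨i, hi⟩ : Fin (n+1)) = p.succAbove ⟨i - 1, hin⟩ from hsa.symm,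
    ins_apply_succAbove]
  rfl

lemma helper_zero (u v : ℕ → ℕ) (n : ℕ) (hu0 : u 0 = 0)
    (hstep : ∀ i, 0 < i → i < n → u i = v (i-1)) :
    ∑ i ∈ range n, u i = ∑ i ∈ range (n-1), v i := by
  rcases n with _ | m
  · simp
  · rw [Finset.sum_range_succ', hu0, add_zero, Nat.add_sub_cancel]
    exact Finset.sum_congr rfl fun i hi => by
      simp only [Finset.mem_range] at hi
      rw [hstep (i+1) (by omega) (by omega)]
      simp

lemma helper_last (u v : ℕ → ℕ) (n : ℕ) (hn : 0 < n)
    (hstep : ∀ i, i < n - 1 → u i = v i) (hlast : u (n-1) = 1) :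
    ∑ i ∈ range n, u i = ∑ i ∈ range (n-1), v i + 1 := by
  obtain ⟨m, rfl⟩ : ∃ m, n = m + 1 := ⟨n-1, by omega⟩
  rw [Finset.sum_range_succ, Nat.add_sub_cancel]
  simp only [Nat.add_sub_cancel] at hstep hlast
  rw [hlast]
  exact congrArg (· + 1) (Finset.sum_congr rfl fun i hi => hstep i (Finset.mem_range.mp hi))

lemma helper_mid (u v : ℕ → ℕ) (P n : ℕ) (hp0 : 0 < P) (hpn : P < n)
    (hstep1 : ∀ i, i < P - 1 → u i = v i)
    (huPm : u (P-1) = 1) (huP : u P = 0)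
    (hstep2 : ∀ i, P < i → i < n → u i = v (i-1)) :
    ∑ i ∈ range n, u i + v (P-1) = ∑ i ∈ range (n-1), v i + 1 := by
  have split1 : ∑ i ∈ range n, u i = ∑ i ∈ range (P+1), u i + ∑ i ∈ Ico (P+1) n, u i := by
    have h := Finset.sum_Ico_consecutive u (Nat.zero_le (P+1)) (show P+1 ≤ n by omega)
    rw [← Finset.range_eq_Ico, ← Finset.range_eq_Ico] at h
    exact h.symm
  have split2 : ∑ i ∈ range (P+1), u i = ∑ i ∈ range (P-1), u i + u (P-1) + u P := by
    have h1 := Finset.sum_range_succ u (P-1)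
    have h2 := Finset.sum_range_succ u P
    rw [show P-1+1 = P by omega] at h1
    rw [h2, h1]
  have split3 : ∑ i ∈ Ico (P+1) n, u i = ∑ i ∈ Ico P (n-1), v i := by
    rw [Finset.sum_Ico_eq_sum_range, Finset.sum_Ico_eq_sum_range,
      show n - (P+1) = n - 1 - P by omega]
    refine Finset.sum_congr rfl fun k hk => ?_
    simp only [Finset.mem_range] at hk
    rw [hstep2 (P+1+k) (by omega) (by omega)]
    congr 1
    omega
  have split4 : ∑ i ∈ range (n-1), v i
      = ∑ i ∈ range (P-1), v i + v (P-1) + ∑ i ∈ Ico P (n-1), v i := by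
    have h1 := Finset.sum_Ico_consecutive v (Nat.zero_le P) (show P ≤ n-1 by omega)
    rw [← Finset.range_eq_Ico, ← Finset.range_eq_Ico] at h1
    have h2 := Finset.sum_range_succ v (P-1)
    rw [show P-1+1 = P by omega] at h2
    rw [← h1, h2]
  rw [split1, split2, split3, split4, huPm, huP,
    Finset.sum_congr rfl (fun i hi => hstep1 i (Finset.mem_range.mp hi))]
  ring

lemma asc_ins_zero {n : ℕ} (τ : Equiv.Perm (Fin n)) (p : Fin (n+1)) (hp : (p : ℕ) = 0) :
    ascents (ins τ p) = ascents τ := by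
  rw [ascents_eq_sum, ascents_eq_sum]
  simp only [Nat.add_sub_cancel]
  apply helper_zero
  · rcases Nat.eq_zero_or_pos n with h0 | hn
    · subst h0
      have e2 : wd (ins τ p) 1 = 0 := by rw [wd, dif_neg (by omega)]
      rw [e2, if_neg (Nat.not_lt_zero _)]
    · have e1 : wd (ins τ p) 0 = n := by
        conv_lhs => rw [← hp]
        exact wd_ins_self τ p
      have e2 : wd (ins τ p) (0+1) = wd τ 0 := by
        have := wd_ins_gt τ p 1 (by omega) (by omega)
        simpa using this
      rw [e1, e2, if_neg]
      have := wd_lt τ 0 hn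
      omega
  · intro i h0i hin
    have e1 : wd (ins τ p) i = wd τ (i-1) := wd_ins_gt τ p i (by omega) (by omega)
    have e2 : wd (ins τ p) (i+1) = wd τ (i-1+1) := by
      have := wd_ins_gt τ p (i+1) (by omega) (by omega)
      rw [this]
      congr 1
      omega
    rw [e1, e2]

lemma asc_ins_last {n : ℕ} (τ : Equiv.Perm (Fin n)) (p : Fin (n+1)) (hn : 0 < n)
    (hp : (p : ℕ) = n) : ascents (ins τ p) = ascents τ + 1 := by
  rw [ascents_eq_sum, ascents_eq_sum]
  simp only [Nat.add_sub_cancel]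
  apply helper_last _ _ n hn
  · intro i hi
    have e1 : wd (ins τ p) i = wd τ i := wd_ins_lt τ p i (by omega)
    have e2 : wd (ins τ p) (i+1) = wd τ (i+1) := wd_ins_lt τ p (i+1) (by omega)
    rw [e1, e2]
  · have e1 : wd (ins τ p) (n-1) = wd τ (n-1) := wd_ins_lt τ p (n-1) (by omega)
    have e2 : wd (ins τ p) (n-1+1) = n := by
      rw [show n-1+1 = n by omega]
      have h := wd_ins_self τ p
      rw [hp] at h
      exact h
    rw [e1, e2, if_pos (wd_lt τ (n-1) (by omega))]

lemma asc_ins_mid {n : ℕ} (τ : Equiv.Perm (Fin n)) (p : Fin (n+1)) (hp0 : 0 < (p : ℕ))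
    (hpn : (p : ℕ) < n) :
    ascents (ins τ p) + (if wd τ ((p:ℕ)-1) < wd τ ((p:ℕ)-1+1) then 1 else 0)
      = ascents τ + 1 := by
  rw [ascents_eq_sum, ascents_eq_sum]
  simp only [Nat.add_sub_cancel]
  refine helper_mid (fun i => if wd (ins τ p) i < wd (ins τ p) (i+1) then 1 else 0)
    (fun i => if wd τ i < wd τ (i+1) then 1 else 0) (p:ℕ) n hp0 hpn ?_ ?_ ?_ ?_
  · intro i hi
    have e1 : wd (ins τ p) i = wd τ i := wd_ins_lt τ p i (by omega)
    have e2 : wd (ins τ p) (i+1) = wd τ (i+1) := wd_ins_lt τ p (i+1) (by omega)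
    simp only [e1, e2]
  · have e1 : wd (ins τ p) ((p:ℕ)-1) = wd τ ((p:ℕ)-1) := wd_ins_lt τ p _ (by omega)
    have e2 : wd (ins τ p) ((p:ℕ)-1+1) = n := by
      rw [show (p:ℕ)-1+1 = (p:ℕ) by omega]
      exact wd_ins_self τ p
    simp only [e1, e2]
    rw [if_pos (wd_lt τ _ (by omega))]
  · have e1 : wd (ins τ p) (p:ℕ) = n := wd_ins_self τ p
    have e2 : wd (ins τ p) ((p:ℕ)+1) = wd τ (p:ℕ) := by
      have := wd_ins_gt τ p ((p:ℕ)+1) (by omega) (by omega)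
      simpa using this
    simp only [e1, e2]
    rw [if_neg]
    have := wd_lt τ (p:ℕ) (by omega)
    omega
  · intro i hpi hin
    have e1 : wd (ins τ p) i = wd τ (i-1) := wd_ins_gt τ p i (by omega) (by omega)
    have e2 : wd (ins τ p) (i+1) = wd τ (i-1+1) := by
      have := wd_ins_gt τ p (i+1) (by omega) (by omega)
      rw [this]
      congr 1
      omega
    simp only [e1, e2]

/-- Value of `ascents (ins τ p)` as a function of `(p : ℕ)`. -/
def gfun {n : ℕ} (τ : Equiv.Perm (Fin n)) (j : ℕ) : ℕ :=
  if j = 0 then ascents τ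
  else if j = n then ascents τ + 1
  else if wd τ (j-1) < wd τ (j-1+1) then ascents τ else ascents τ + 1

lemma asc_ins_eq_g {n : ℕ} (τ : Equiv.Perm (Fin n)) (p : Fin (n+1)) :
    ascents (ins τ p) = gfun τ (p : ℕ) := by
  rcases Nat.eq_zero_or_pos (p : ℕ) with h0 | h0
  · rw [gfun, if_pos h0]
    exact asc_ins_zero τ p h0
  rcases Nat.lt_or_ge (p : ℕ) n with hlt | hge
  · rw [gfun, if_neg (by omega), if_neg (by omega)]
    have key := asc_ins_mid τ p h0 hlt
    split_ifs with h
    · rw [if_pos h] at key; omega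
    · rw [if_neg h] at key; omega
  · have hp : (p : ℕ) = n := by have := p.isLt; omega
    rw [gfun, if_neg (by omega), if_pos hp]
    exact asc_ins_last τ p (by omega) hp

/-- The Eulerian-type polynomial `∑_{σ ∈ S_n} X^{asc σ}`. -/
noncomputable def Ap (n : ℕ) : Polynomial ℚ :=
  ∑ σ : Equiv.Perm (Fin n), Polynomial.X ^ ascents σ

lemma ascents_of_subsingleton {m : ℕ} (hm : m ≤ 1) (σ : Equiv.Perm (Fin m)) :
    ascents σ = 0 := by
  have := ascents_le σ
  omega

lemma Ap_zero : Ap 0 = 1 := by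
  rw [Ap]
  rw [Fintype.sum_eq_single (Equiv.refl (Fin 0)) (fun σ hσ =>
    absurd (Subsingleton.elim σ _) hσ)]
  rw [ascents_of_subsingleton (by omega), pow_zero]

lemma Ap_one : Ap 1 = 1 := by
  rw [Ap]
  rw [Fintype.sum_eq_single (Equiv.refl (Fin 1)) (fun σ hσ =>
    absurd (Subsingleton.elim σ _) hσ)]
  rw [ascents_of_subsingleton (by omega), pow_zero]

/-- Summing over all insertion positions. -/
lemma sum_ins {n : ℕ} (hn : 0 < n) (τ : Equiv.Perm (Fin n)) :
    ∑ p : Fin (n+1), (Polynomial.X : Polynomial ℚ) ^ ascents (ins τ p)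
      = (ascents τ + 1) • Polynomial.X ^ ascents τ
        + (n - ascents τ) • Polynomial.X ^ (ascents τ + 1) := by
  obtain ⟨m, rfl⟩ : ∃ m, n = m + 1 := ⟨n-1, by omega⟩
  have hm := ascents_le τ
  simp only [Nat.add_sub_cancel] at hm
  calc ∑ p : Fin (m+2), (Polynomial.X : Polynomial ℚ) ^ ascents (ins τ p)
      = ∑ j ∈ range (m+2), (Polynomial.X : Polynomial ℚ) ^ gfun τ j := by
        rw [← Fin.sum_univ_eq_sum_range
          (fun j : ℕ => (Polynomial.X : Polynomial ℚ) ^ gfun τ j) (m+2)]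
        exact Finset.sum_congr rfl fun p _ => by rw [asc_ins_eq_g]
    _ = _ := by
        rw [Finset.sum_range_succ, Finset.sum_range_succ']
        have hg0 : gfun τ 0 = ascents τ := by rw [gfun, if_pos rfl]
        have hgl : gfun (n := m+1) τ (m+1) = ascents τ + 1 := by
          rw [gfun, if_neg (by omega), if_pos rfl]
        have hgm : ∀ i ∈ range m, (Polynomial.X : Polynomial ℚ) ^ gfun τ (i+1)
            = if wd τ i < wd τ (i+1) then
                (Polynomial.X : Polynomial ℚ) ^ ascents τ
              else Polynomial.X ^ (ascents τ + 1) := by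
          intro i hi
          simp only [Finset.mem_range] at hi
          rw [gfun, if_neg (by omega), if_neg (by omega)]
          simp only [Nat.add_sub_cancel]
          split <;> rfl
        rw [Finset.sum_congr rfl hgm, hg0, hgl, Finset.sum_ite]
        have hc1 : (Finset.filter (fun i => wd τ i < wd τ (i+1)) (range m)).card
            = ascents τ := by
          rw [ascents_eq_sum τ]
          simp only [Nat.add_sub_cancel]
          rw [Finset.card_filter]
        have hc2 : (Finset.filter (fun i => ¬ wd τ i < wd τ (i+1)) (range m)).card
            = m - ascents τ := by
          have := Finset.card_filter_add_card_filter_not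
            (s := range m) (p := fun i => wd τ i < wd τ (i+1))
          rw [Finset.card_range] at this
          omega
        rw [Finset.sum_const, Finset.sum_const, hc1, hc2]
        rw [succ_nsmul ((Polynomial.X : Polynomial ℚ) ^ ascents τ) (ascents τ)]
        rw [show m + 1 - ascents τ = (m - ascents τ) + 1 by omega]
        rw [succ_nsmul ((Polynomial.X : Polynomial ℚ) ^ (ascents τ + 1)) (m - ascents τ)]
        ring

lemma per_tau (n m : ℕ) (hm : m ≤ n - 1) (hn : 0 < n) :
    ((m+1) • (Polynomial.X : Polynomial ℚ) ^ m + (n-m) • Polynomial.X ^ (m+1))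
      = (1 + (n : Polynomial ℚ) * Polynomial.X) * Polynomial.X ^ m
        + Polynomial.X * (1 - Polynomial.X)
          * (Polynomial.C (m : ℚ) * Polynomial.X ^ (m-1)) := by
  have hmn : m ≤ n := by omega
  rcases m with _ | m'
  · simp [nsmul_eq_mul]
  · rw [nsmul_eq_mul, nsmul_eq_mul, Polynomial.C_eq_natCast]
    push_cast [Nat.cast_sub hmn]
    try simp only [Nat.add_sub_cancel]
    ring

lemma Ap_succ (n : ℕ) :
    Ap (n+1) = (1 + (n : Polynomial ℚ) * Polynomial.X) * Ap n
      + Polynomial.X * (1 - Polynomial.X) * Polynomial.derivative (Ap n) := by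
  rcases Nat.eq_zero_or_pos n with h0 | hn
  · subst h0
    rw [Ap_zero, Ap_one]
    simp
  rw [Ap, sum_perm_succ (fun σ => (Polynomial.X : Polynomial ℚ) ^ ascents σ)]
  rw [Finset.sum_congr rfl (fun τ _ => sum_ins hn τ)]
  rw [Ap, Finset.mul_sum, Polynomial.derivative_sum, Finset.mul_sum, ← Finset.sum_add_distrib]
  refine Finset.sum_congr rfl fun τ _ => ?_
  rw [Polynomial.derivative_X_pow]
  exact per_tau n (ascents τ) (ascents_le τ) hn

open Polynomial in
noncomputable def Bp (n : ℕ) : Polynomial ℚ :=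
  ∑ j ∈ range (n+1), (n.choose j : Polynomial ℚ) * Ap j * Ap (n - j)

open Polynomial

lemma Bp_reflect_aux {M : Type*} [AddCommMonoid M] (n : ℕ) (f : ℕ → ℕ → M) :
    ∑ j ∈ range (n+1), f j (n-j) = ∑ j ∈ range (n+1), f (n-j) j := by
  rw [← Finset.sum_range_reflect (fun j => f j (n-j)) (n+1)]
  refine Finset.sum_congr rfl fun j hj => ?_
  simp only [Finset.mem_range] at hj
  rw [show n + 1 - 1 - j = n - j by omega, show n - (n - j) = j by omega]

lemma two_sum_j (n : ℕ) :
    (2 : Polynomial ℚ) * ∑ j ∈ range (n+1),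
        (j : Polynomial ℚ) * ((n.choose j : Polynomial ℚ) * Ap j * Ap (n-j))
      = (n : Polynomial ℚ) * Bp n := by
  have refl := Bp_reflect_aux n
    (fun a b => (a : Polynomial ℚ) * ((n.choose a : Polynomial ℚ) * Ap a * Ap b))
  rw [Bp, two_mul, Finset.mul_sum]
  nth_rewrite 2 [refl]
  rw [← Finset.sum_add_distrib]
  refine Finset.sum_congr rfl fun j hj => ?_
  simp only [Finset.mem_range] at hj
  have hjn : j ≤ n := by omega
  rw [Nat.choose_symm hjn]
  have hcast : ((j:ℕ) : Polynomial ℚ) + (((n-j:ℕ)) : Polynomial ℚ) = (n : Polynomial ℚ) := by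
    rw [← Nat.cast_add]
    congr 1
    omega
  calc (j : Polynomial ℚ) * ((n.choose j : Polynomial ℚ) * Ap j * Ap (n-j))
        + ((n-j : ℕ) : Polynomial ℚ) * ((n.choose j : Polynomial ℚ) * Ap (n-j) * Ap j)
      = ((j : Polynomial ℚ) + ((n-j:ℕ) : Polynomial ℚ))
          * ((n.choose j : Polynomial ℚ) * Ap j * Ap (n-j)) := by ring
    _ = (n : Polynomial ℚ) * ((n.choose j : Polynomial ℚ) * Ap j * Ap (n-j)) := by
          rw [hcast]

lemma derivative_Bp (n : ℕ) :
    derivative (Bp n) = 2 * ∑ j ∈ range (n+1),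
      (n.choose j : Polynomial ℚ) * derivative (Ap j) * Ap (n-j) := by
  rw [Bp, derivative_sum, two_mul]
  have refl := Bp_reflect_aux n
    (fun a b => (n.choose a : Polynomial ℚ) * derivative (Ap a) * Ap b)
  nth_rewrite 2 [refl]
  rw [← Finset.sum_add_distrib]
  refine Finset.sum_congr rfl fun j hj => ?_
  simp only [Finset.mem_range] at hj
  rw [Nat.choose_symm (show j ≤ n by omega)]
  rw [derivative_mul, derivative_mul, derivative_natCast]
  ring

lemma Bp_succ_eq (n : ℕ) :
    Bp (n+1) = 2 * ∑ j ∈ range (n+1),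
      (n.choose j : Polynomial ℚ) * Ap (j+1) * Ap (n-j) := by
  have g0 : ∀ i, ((n.choose i : ℕ) : Polynomial ℚ) * Ap i * Ap (n+1-i)
      = (fun i => ((n.choose i : ℕ) : Polynomial ℚ) * Ap i * Ap (n+1-i)) i := fun i => rfl
  rw [Bp, Finset.sum_range_succ' (fun j =>
    (((n+1).choose j : ℕ) : Polynomial ℚ) * Ap j * Ap (n+1-j)) (n+1)]
  simp only [Nat.choose_succ_succ, Nat.choose_zero_right, Nat.cast_one, one_mul,
    Nat.sub_zero, Nat.cast_add]
  have hsplit : ∀ j ∈ range (n+1),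
      (((n.choose j : ℕ) : Polynomial ℚ) + ((n.choose (j+1) : ℕ) : Polynomial ℚ))
          * Ap (j+1) * Ap (n+1-(j+1))
        = ((n.choose j : ℕ) : Polynomial ℚ) * Ap (j+1) * Ap (n-j)
          + ((n.choose (j+1) : ℕ) : Polynomial ℚ) * Ap (j+1) * Ap (n+1-(j+1)) := by
    intro j hj
    rw [show n+1-(j+1) = n - j by omega]
    ring
  rw [Finset.sum_congr rfl hsplit, Finset.sum_add_distrib]
  have h2 : ∑ j ∈ range (n+1), ((n.choose (j+1) : ℕ) : Polynomial ℚ) * Ap (j+1) * Ap (n+1-(j+1))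
      = ∑ j ∈ range (n+1), ((n.choose j : ℕ) : Polynomial ℚ) * Ap j * Ap (n+1-j)
        - Ap 0 * Ap (n+1) := by
    have e1 := Finset.sum_range_succ'
      (fun j => ((n.choose j : ℕ) : Polynomial ℚ) * Ap j * Ap (n+1-j)) (n+1)
    have e2 := Finset.sum_range_succ
      (fun j => ((n.choose j : ℕ) : Polynomial ℚ) * Ap j * Ap (n+1-j)) (n+1)
    rw [Nat.choose_succ_self, Nat.cast_zero, zero_mul, zero_mul, add_zero] at e2
    rw [Nat.choose_zero_right, Nat.cast_one, one_mul, Nat.sub_zero] at e1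
    rw [← e2, e1]
    ring
  have h3 : ∑ j ∈ range (n+1), ((n.choose j : ℕ) : Polynomial ℚ) * Ap j * Ap (n+1-j)
      = ∑ j ∈ range (n+1), ((n.choose j : ℕ) : Polynomial ℚ) * Ap (j+1) * Ap (n-j) := by
    have refl := Bp_reflect_aux n
      (fun a b => ((n.choose a : ℕ) : Polynomial ℚ) * Ap a * Ap (b+1))
    calc ∑ j ∈ range (n+1), ((n.choose j : ℕ) : Polynomial ℚ) * Ap j * Ap (n+1-j)
        = ∑ j ∈ range (n+1), ((n.choose j : ℕ) : Polynomial ℚ) * Ap j * Ap ((n-j)+1) := by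
          refine Finset.sum_congr rfl fun j hj => ?_
          simp only [Finset.mem_range] at hj
          rw [show n+1-j = (n-j)+1 by omega]
      _ = ∑ j ∈ range (n+1), ((n.choose (n-j) : ℕ) : Polynomial ℚ) * Ap (n-j) * Ap (j+1) := refl
      _ = ∑ j ∈ range (n+1), ((n.choose j : ℕ) : Polynomial ℚ) * Ap (j+1) * Ap (n-j) := by
          refine Finset.sum_congr rfl fun j hj => ?_
          simp only [Finset.mem_range] at hj
          rw [Nat.choose_symm (show j ≤ n by omega)]
          ring
  rw [h2, h3]
  ring

lemma Bp_succ (n : ℕ) :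
    Bp (n+1) = (2 + (n : Polynomial ℚ) * X) * Bp n + X * (1 - X) * derivative (Bp n) := by
  rw [Bp_succ_eq]
  have hT : ∑ j ∈ range (n+1), ((n.choose j : ℕ) : Polynomial ℚ) * Ap (j+1) * Ap (n-j)
      = Bp n
        + X * ∑ j ∈ range (n+1),
            (j : Polynomial ℚ) * ((n.choose j : Polynomial ℚ) * Ap j * Ap (n-j))
        + X * (1-X) * ∑ j ∈ range (n+1),
            (n.choose j : Polynomial ℚ) * derivative (Ap j) * Ap (n-j) := by
    rw [Bp, Finset.mul_sum, Finset.mul_sum, ← Finset.sum_add_distrib, ← Finset.sum_add_distrib]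
    refine Finset.sum_congr rfl fun j hj => ?_
    rw [Ap_succ j]
    ring
  rw [hT]
  have h2 := two_sum_j n
  have h3 := derivative_Bp n
  linear_combination X * h2 - X * (1 - X) * h3

lemma PQ (n : ℕ) :
    Ap (n+1) = X * Bp n + (1 - X) * Ap n
      ∧ Bp n = ((n : Polynomial ℚ) + 1) * Ap n + (1 - X) * derivative (Ap n) := by
  induction n with
  | zero =>
    have hB0 : Bp 0 = 1 := by simp [Bp, Ap_zero]
    constructor
    · rw [Ap_one, hB0, Ap_zero]
      ring
    · rw [hB0, Ap_zero, derivative_one]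
      push_cast
      ring
  | succ n ih =>
    obtain ⟨hP, hQ⟩ := ih
    have hdP : derivative (Ap (n+1))
        = Bp n + X * derivative (Bp n) - Ap n + (1 - X) * derivative (Ap n) := by
      rw [hP]
      simp only [derivative_add, derivative_mul, derivative_sub, derivative_one,
        derivative_X, derivative_natCast]
      ring
    have hdQ : derivative (Bp n)
        = (n : Polynomial ℚ) * derivative (Ap n)
          + (1 - X) * derivative (derivative (Ap n)) - derivative (Ap n)
          + derivative (Ap n) := by
      rw [hQ]
      simp only [derivative_add, derivative_mul, derivative_sub, derivative_one,
        derivative_X, derivative_natCast]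
      ring
    have hA := Ap_succ (n+1)
    have hB := Bp_succ n
    constructor
    · rw [hA, hB, hdP, hP, hdQ, hQ]
      push_cast
      ring
    · rw [hB, hdP, hP, hdQ, hQ]
      push_cast
      ring

lemma Pprime (m : ℕ) :
    Ap (m+2) = (1 + X) * Ap (m+1)
      + X * ∑ i ∈ range m,
          (((m+1).choose (i+1) : ℕ) : Polynomial ℚ) * Ap (i+1) * Ap (m-i) := by
  have hP := (PQ (m+1)).1
  have e2 := Finset.sum_range_succ
    (fun j => (((m+1).choose j : ℕ) : Polynomial ℚ) * Ap j * Ap (m+1-j)) (m+1)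
  have e1 := Finset.sum_range_succ'
    (fun j => (((m+1).choose j : ℕ) : Polynomial ℚ) * Ap j * Ap (m+1-j)) m
  have hB : Bp (m+1) = 2 * Ap (m+1)
      + ∑ i ∈ range m, (((m+1).choose (i+1) : ℕ) : Polynomial ℚ) * Ap (i+1) * Ap (m-i) := by
    rw [Bp, e2, e1]
    simp only [Nat.choose_zero_right, Nat.choose_self, Nat.cast_one, one_mul,
      Nat.sub_zero, Nat.sub_self, Nat.add_sub_add_right, Ap_zero, mul_one]
    ring
  rw [hP, hB]
  ring

lemma xAp {n : ℕ} (hn : 0 < n) :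
    Polynomial.X * Ap n = ∑ ν ∈ Icc 1 n,
      ((Finset.univ.filter fun σ : Equiv.Perm (Fin n) => ascents σ = ν - 1).card)
        • (Polynomial.X : Polynomial ℚ) ^ ν := by
  rw [Ap, Finset.mul_sum]
  have h1 : ∀ σ : Equiv.Perm (Fin n),
      Polynomial.X * (Polynomial.X : Polynomial ℚ) ^ ascents σ
        = Polynomial.X ^ (ascents σ + 1) := fun σ => by
    rw [pow_succ, mul_comm]
  rw [Finset.sum_congr rfl fun σ _ => h1 σ]
  rw [← Finset.sum_fiberwise_of_maps_to (g := fun σ : Equiv.Perm (Fin n) => ascents σ + 1)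
    (t := Icc 1 n) (fun σ _ => by
      simp only [Finset.mem_Icc]
      have := ascents_le σ
      omega) (fun σ => (Polynomial.X : Polynomial ℚ) ^ (ascents σ + 1))]
  refine Finset.sum_congr rfl fun ν hν => ?_
  simp only [Finset.mem_Icc] at hν
  have hfe : Finset.filter (fun σ : Equiv.Perm (Fin n) => ascents σ + 1 = ν) Finset.univ
      = Finset.filter (fun σ : Equiv.Perm (Fin n) => ascents σ = ν - 1) Finset.univ := by
    refine Finset.filter_congr fun σ _ => ?_
    constructor <;> intro h <;> omega
  rw [← hfe]
  calc ∑ σ ∈ Finset.filter (fun σ : Equiv.Perm (Fin n) => ascents σ + 1 = ν) Finset.univ,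
        (Polynomial.X : Polynomial ℚ) ^ (ascents σ + 1)
      = ∑ σ ∈ Finset.filter (fun σ : Equiv.Perm (Fin n) => ascents σ + 1 = ν) Finset.univ,
        (Polynomial.X : Polynomial ℚ) ^ ν := by
        refine Finset.sum_congr rfl fun σ hσ => ?_
        simp only [Finset.mem_filter] at hσ
        rw [hσ.2]
    _ = _ := by rw [Finset.sum_const]

lemma Lpoly_match (m : ℕ) : Lpoly (m+2)
    = ∑ ν ∈ Finset.Icc 1 (m+2-1), Polynomial.C (lam (m+2) ν) * Polynomial.X ^ ν := Lpoly.eq_2 (m+2) (by omega)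

lemma Lpoly_eq_A (n : ℕ) (hn : 0 < n) :
    Lpoly (n+1) = Polynomial.C ((n.factorial : ℚ)⁻¹) * (Polynomial.X * Ap n) := by
  obtain ⟨m, rfl⟩ : ∃ m, n = m + 1 := ⟨n-1, by omega⟩
  rw [Lpoly_match m, show m+2-1 = m+1 from rfl, xAp (show 0 < m+1 by omega), Finset.mul_sum]
  refine Finset.sum_congr rfl fun ν hν => ?_
  have hlam : lam (m+2) ν
      = ((Finset.univ.filter fun σ : Equiv.Perm (Fin (m+1)) => ascents σ = ν - 1).card : ℚ)
          * (((m+1).factorial : ℚ))⁻¹ := by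
    rw [lam, div_eq_mul_inv]
    rfl
  rw [hlam, map_mul, nsmul_eq_mul, Polynomial.C_eq_natCast]
  ring

end LpolyAux

open Finset Polynomial in
theorem LpolyAux.main :
    Lpoly 2 = Polynomial.X ∧
      ∀ k : ℕ, 3 ≤ k →
        Lpoly k = Polynomial.C (1 / ((k : ℚ) - 1)) *
          ∑ r ∈ Finset.Icc 1 (k - 1), Lpoly r * Lpoly (k - r) := by
  constructor
  · rw [show (2:ℕ) = 1+1 from rfl, Lpoly_eq_A 1 (by omega), Ap_one]
    simp
  intro k hk
  obtain ⟨m, rfl⟩ : ∃ m, k = m + 3 := ⟨k-3, by omega⟩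
  have hLk : Lpoly (m+3) = C (((m+2).factorial : ℚ)⁻¹) * (X * Ap (m+2)) :=
    Lpoly_eq_A (m+2) (by omega)
  have hLM : Lpoly (m+2) = C (((m+1).factorial : ℚ)⁻¹) * (X * Ap (m+1)) :=
    Lpoly_eq_A (m+1) (by omega)
  have hL1 : Lpoly 1 = C (1/2 : ℚ) * (X + 1) := rfl
  have hhalf : (C (1/2 : ℚ)) * 2 = 1 := by
    rw [show (2 : Polynomial ℚ) = C (2:ℚ) from (map_ofNat C 2).symm, ← C_mul]
    norm_num
  have hmid : ∀ i ∈ range m, Lpoly (1+(i+1)) * Lpoly (m+3-(1+(i+1)))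
      = C (((m+1).factorial : ℚ)⁻¹) * ((((m+1).choose (i+1) : ℕ) : Polynomial ℚ)
          * (X * Ap (i+1)) * (X * Ap (m-i))) := by
    intro i hi
    simp only [Finset.mem_range] at hi
    rw [show m+3-(1+(i+1)) = (m-i)+1 by omega, show 1+(i+1) = (i+1)+1 by omega,
      Lpoly_eq_A (i+1) (by omega), Lpoly_eq_A (m-i) (by omega)]
    have hc : ((i+1).factorial : ℚ)⁻¹ * (((m-i).factorial : ℚ))⁻¹
        = (((m+1).choose (i+1) : ℕ) : ℚ) * (((m+1).factorial : ℚ))⁻¹ := by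
      have key := Nat.choose_mul_factorial_mul_factorial (show i+1 ≤ m+1 by omega)
      rw [show m+1-(i+1) = m-i by omega] at key
      have keyQ : (((m+1).choose (i+1) : ℕ) : ℚ) * (((i+1).factorial : ℕ) : ℚ)
          * (((m-i).factorial : ℕ) : ℚ) = (((m+1).factorial : ℕ) : ℚ) := by
        exact_mod_cast congrArg (fun t : ℕ => (t : ℚ)) key
      have ha : (((i+1).factorial : ℕ) : ℚ) ≠ 0 := Nat.cast_ne_zero.mpr (Nat.factorial_ne_zero _)
      have hb : (((m-i).factorial : ℕ) : ℚ) ≠ 0 := Nat.cast_ne_zero.mpr (Nat.factorial_ne_zero _)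
      have hf : (((m+1).factorial : ℕ) : ℚ) ≠ 0 := Nat.cast_ne_zero.mpr (Nat.factorial_ne_zero _)
      field_simp
      linear_combination -keyQ
    calc (C (((i+1).factorial : ℚ)⁻¹) * (X * Ap (i+1)))
          * (C (((m-i).factorial : ℚ)⁻¹) * (X * Ap (m-i)))
        = C (((i+1).factorial : ℚ)⁻¹ * (((m-i).factorial : ℚ))⁻¹)
            * ((X * Ap (i+1)) * (X * Ap (m-i))) := by
          rw [map_mul]; ring
      _ = _ := by
          rw [hc, map_mul, Polynomial.C_eq_natCast]; ring
  have hS : ∑ r ∈ Icc 1 (m+3-1), Lpoly r * Lpoly (m+3-r)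
      = C (((m+1).factorial : ℚ)⁻¹) * (X * Ap (m+2)) := by
    rw [show m+3-1 = m+2 from rfl, ← Finset.Ico_add_one_right_eq_Icc,
      Finset.sum_Ico_eq_sum_range, show m+2+1-1 = m+2 from rfl,
      Finset.sum_range_succ, Finset.sum_range_succ',
      Finset.sum_congr rfl hmid,
      show m+3-(1+(m+1)) = 1 by omega, show 1+(m+1) = m+2 by omega,
      show m+3-(1+0) = m+2 by omega, show 1+0 = 1 from rfl,
      hL1, hLM, Pprime m]
    have hsum2 : ∑ i ∈ range m, C (((m+1).factorial : ℚ)⁻¹)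
          * ((((m+1).choose (i+1) : ℕ) : Polynomial ℚ) * (X * Ap (i+1)) * (X * Ap (m-i)))
        = C (((m+1).factorial : ℚ)⁻¹) * (X * (X * ∑ i ∈ range m,
            (((m+1).choose (i+1) : ℕ) : Polynomial ℚ) * Ap (i+1) * Ap (m-i))) := by
      rw [Finset.mul_sum, Finset.mul_sum, Finset.mul_sum]
      refine Finset.sum_congr rfl fun i _ => ?_
      ring
    rw [hsum2]
    linear_combination (C (((m+1).factorial : ℚ)⁻¹) * (X+1) * X * Ap (m+1)) * hhalf
  rw [hS, hLk]
  have hcoef : (1 / (((m+3 : ℕ) : ℚ) - 1)) * (((m+1).factorial : ℚ))⁻¹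
      = (((m+2).factorial : ℚ))⁻¹ := by
    have hfac : ((m+2).factorial : ℚ) = ((m+2 : ℕ) : ℚ) * ((m+1).factorial : ℚ) := by
      rw [show (m+2).factorial = (m+2) * (m+1).factorial from rfl]
      push_cast
      ring
    rw [hfac, mul_inv]
    push_cast
    rw [show ((m:ℚ)+3) - 1 = (m:ℚ)+2 by ring, one_div]
  conv_rhs => rw [← mul_assoc, ← C_mul, hcoef]



/-- `L_2(X) = X`, and for every `k ≥ 3`,
`L_k(X) = (1/(k−1)) · Σ_{r=1}^{k−1} L_r(X)·L_{k−r}(X)`. -/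
theorem Lpoly_recursion :
    Lpoly 2 = Polynomial.X ∧
      ∀ k : ℕ, 3 ≤ k →
        Lpoly k = Polynomial.C (1 / ((k : ℚ) - 1)) *
          ∑ r ∈ Finset.Icc 1 (k - 1), Lpoly r * Lpoly (k - r) := by
  exact LpolyAux.main
end

section
/- In the formal power series ring ℚ[[X,Y]], the series L(X,Y) = Σ_{k≥1} L_k(X) Y^{k−1} admits the closed form L(X,Y) = ((1−X)/2) · (1 + X·exp((1−X)Y)) / (1 − X·exp((1−X)Y)). -/
/-- We view `ℚ[[X,Y]]` as `(ℚ[[X]])[[Y]]`: the inner variable is `X`, the outer one is `Y`. -/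
noncomputable def Xv : PowerSeries (PowerSeries ℚ) := PowerSeries.C (R := PowerSeries ℚ) PowerSeries.X

/-- The generating series `L(X,Y) = Σ_{k≥1} L_k(X) Y^{k−1} ∈ ℚ[[X,Y]]`. -/
noncomputable def Lser2 : PowerSeries (PowerSeries ℚ) :=
  PowerSeries.mk fun m => ((Lpoly (m + 1) : Polynomial ℚ) : PowerSeries ℚ)

/-- The formal exponential `exp((1−X)Y) = Σ_{b≥0} (1−X)^b Y^b / b! ∈ ℚ[[X,Y]]`. -/
noncomputable def expOneSubXY : PowerSeries (PowerSeries ℚ) :=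
  PowerSeries.mk fun b =>
    (1 - PowerSeries.X : PowerSeries ℚ) ^ b * PowerSeries.C (R := ℚ) (1 / (b.factorial : ℚ))

open Finset Equiv Polynomial PowerSeries

variable {n : ℕ}

/-- The ascent predicate. -/
abbrev aP {n : ℕ} (σ : Equiv.Perm (Fin n)) (i : Fin n) : Prop :=
  ∃ h : (i : ℕ) + 1 < n, σ i < σ ⟨(i : ℕ) + 1, h⟩

lemma ascents_eq_sum (σ : Equiv.Perm (Fin n)) :
    ascents σ = ∑ i : Fin n, if aP σ i then 1 else 0 := by
  rw [ascents, Finset.card_eq_sum_ones, Finset.sum_filter]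

/-- insertion of the maximal value at position `p`. -/
def ins (σ : Equiv.Perm (Fin n)) (p : Fin (n + 1)) : Equiv.Perm (Fin (n + 1)) :=
  (finSuccEquiv' p).trans ((Equiv.optionCongr σ).trans (finSuccEquiv' (Fin.last n)).symm)

@[simp] lemma ins_self (σ : Equiv.Perm (Fin n)) (p : Fin (n + 1)) :
    ins σ p p = Fin.last n := by
  simp [ins]

@[simp] lemma ins_succAbove (σ : Equiv.Perm (Fin n)) (p : Fin (n + 1)) (j : Fin n) :
    ins σ p (p.succAbove j) = (σ j).castSucc := by
  simp [ins, Fin.succAbove_last]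

lemma ins_lt_last (σ : Equiv.Perm (Fin n)) (p : Fin (n + 1)) {q : Fin (n + 1)}
    (hq : q ≠ p) : ins σ p q < Fin.last n := by
  rw [Fin.lt_last_iff_ne_last]
  intro h
  exact hq ((ins σ p).injective (h.trans (ins_self σ p).symm))

lemma aP_ins_succAbove (σ : Equiv.Perm (Fin n)) (p : Fin (n + 1)) (j : Fin n) :
    aP (ins σ p) (p.succAbove j) ↔ ((j : ℕ) + 1 = (p : ℕ) ∨ aP σ j) := by
  have hlt1 : ∀ q : Fin (n + 1), (q : ℕ) + 1 < n + 1 → True := fun _ _ => trivial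
  rcases Nat.lt_or_ge (j : ℕ) (p : ℕ) with hlt | hge
  · have hsa : p.succAbove j = j.castSucc :=
      Fin.succAbove_of_castSucc_lt _ _
        (by simp only [Fin.lt_iff_val_lt_val, Fin.coe_castSucc]; omega)
    have hcoe : ((p.succAbove j : Fin (n+1)) : ℕ) = (j : ℕ) := by rw [hsa]; simp
    by_cases h1 : (j : ℕ) + 1 = (p : ℕ)
    · refine iff_of_true ?_ (Or.inl h1)
      refine ⟨by rw [hcoe]; omega, ?_⟩
      have hp : (⟨((p.succAbove j : Fin (n+1)) : ℕ) + 1, by rw [hcoe]; omega⟩ : Fin (n + 1)) = p := by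
        apply Fin.ext; simp [hcoe, h1]
      rw [hp, ins_self, ins_succAbove]
      exact Fin.castSucc_lt_last _
    · have h2 : (j : ℕ) + 1 < (p : ℕ) := by omega
      have hjn : (j : ℕ) + 1 < n := by have := p.isLt; omega
      have hsa' : p.succAbove ⟨(j : ℕ) + 1, hjn⟩ = (⟨(j : ℕ) + 1, hjn⟩ : Fin n).castSucc :=
        Fin.succAbove_of_castSucc_lt _ _
          (by simp only [Fin.lt_iff_val_lt_val, Fin.coe_castSucc]; omega)
      have hidx : ∀ h : ((p.succAbove j : Fin (n+1)) : ℕ) + 1 < n + 1,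
          (⟨((p.succAbove j : Fin (n+1)) : ℕ) + 1, h⟩ : Fin (n + 1))
            = p.succAbove ⟨(j : ℕ) + 1, hjn⟩ := by
        intro h
        rw [hsa']
        apply Fin.ext; simp [hcoe]
      constructor
      · rintro ⟨h, hlt2⟩
        rw [hidx h, ins_succAbove, ins_succAbove] at hlt2
        exact Or.inr ⟨hjn, Fin.castSucc_lt_castSucc_iff.mp hlt2⟩
      · rintro (h1' | ⟨h, hlt2⟩)
        · exact absurd h1' h1
        · refine ⟨by rw [hcoe]; omega, ?_⟩
          rw [hidx _, ins_succAbove, ins_succAbove]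
          exact Fin.castSucc_lt_castSucc_iff.mpr hlt2
  · have hsa : p.succAbove j = j.succ :=
      Fin.succAbove_of_le_castSucc _ _
        (by simp only [Fin.le_iff_val_le_val, Fin.coe_castSucc]; omega)
    have hne : ¬((j : ℕ) + 1 = (p : ℕ)) := by omega
    simp only [hne, false_or]
    have hcoe : ((p.succAbove j : Fin (n+1)) : ℕ) = (j : ℕ) + 1 := by rw [hsa]; simp
    have hidx : ∀ hjn : (j : ℕ) + 1 < n, ∀ h : ((p.succAbove j : Fin (n+1)) : ℕ) + 1 < n + 1,
        (⟨((p.succAbove j : Fin (n+1)) : ℕ) + 1, h⟩ : Fin (n + 1))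
          = p.succAbove ⟨(j : ℕ) + 1, hjn⟩ := by
      intro hjn h
      have hsa' : p.succAbove ⟨(j : ℕ) + 1, hjn⟩ = (⟨(j : ℕ) + 1, hjn⟩ : Fin n).succ :=
        Fin.succAbove_of_le_castSucc _ _
          (by simp only [Fin.le_iff_val_le_val, Fin.coe_castSucc]; omega)
      rw [hsa']
      apply Fin.ext; simp [hcoe]
    constructor
    · rintro ⟨h, hlt2⟩
      have hjn : (j : ℕ) + 1 < n := by rw [hcoe] at h; omega
      rw [hidx hjn h, ins_succAbove, ins_succAbove] at hlt2
      exact ⟨hjn, Fin.castSucc_lt_castSucc_iff.mp hlt2⟩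
    · rintro ⟨hjn, hlt2⟩
      refine ⟨by rw [hcoe]; omega, ?_⟩
      rw [hidx hjn _, ins_succAbove, ins_succAbove]
      exact Fin.castSucc_lt_castSucc_iff.mpr hlt2

lemma not_aP_ins_self (σ : Equiv.Perm (Fin n)) (p : Fin (n + 1)) :
    ¬ aP (ins σ p) p := by
  rintro ⟨h, hlt⟩
  have hne : (⟨(p : ℕ) + 1, h⟩ : Fin (n + 1)) ≠ p := by
    intro hh; have := congrArg Fin.val hh; simp at this
  have := ins_lt_last σ p hne
  rw [ins_self] at hlt
  exact absurd (hlt.trans this) (lt_irrefl _)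

lemma ascents_ins (σ : Equiv.Perm (Fin n)) (p : Fin (n + 1)) :
    ascents (ins σ p) = ∑ j : Fin n, if ((j : ℕ) + 1 = (p : ℕ) ∨ aP σ j) then 1 else 0 := by
  rw [ascents_eq_sum, Fin.sum_univ_succAbove _ p, if_neg (not_aP_ins_self σ p), zero_add]
  exact Finset.sum_congr rfl fun j _ => by
    rw [if_congr (aP_ins_succAbove σ p j) rfl rfl]

lemma ascents_ins_zero (σ : Equiv.Perm (Fin n)) :
    ascents (ins σ 0) = ascents σ := by
  rw [ascents_ins, ascents_eq_sum]
  exact Finset.sum_congr rfl fun j _ => by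
    have : ¬((j : ℕ) + 1 = ((0 : Fin (n+1)) : ℕ)) := by simp
    simp [this]

lemma ascents_ins_succ (σ : Equiv.Perm (Fin n)) (q : Fin n) :
    ascents (ins σ q.succ) = ascents σ + if aP σ q then 0 else 1 := by
  rw [ascents_ins]
  have hiff : ∀ j : Fin n, ((j : ℕ) + 1 = ((q.succ : Fin (n+1)) : ℕ)) ↔ j = q := by
    intro j
    rw [Fin.val_succ]
    constructor
    · intro h; exact Fin.ext (by omega)
    · intro h; rw [h]
  have step : ∀ j : Fin n, (if ((j : ℕ) + 1 = ((q.succ : Fin (n+1)) : ℕ) ∨ aP σ j) then (1:ℕ) else 0)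
      = (if aP σ j then 1 else 0) + (if j = q ∧ ¬ aP σ j then 1 else 0) := by
    intro j
    by_cases hq : j = q
    · by_cases hP : aP σ j
      · rw [if_pos (Or.inl ((hiff j).mpr hq)), if_pos hP, if_neg (fun h => h.2 hP)]
      · rw [if_pos (Or.inl ((hiff j).mpr hq)), if_neg hP, if_pos ⟨hq, hP⟩]
    · by_cases hP : aP σ j
      · rw [if_pos (Or.inr hP), if_pos hP, if_neg (fun h => hq h.1)]
      · rw [if_neg ?_, if_neg hP, if_neg (fun h => hq h.1)]
        rintro (h | h)
        · exact hq ((hiff j).mp h)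
        · exact hP h
  rw [Finset.sum_congr rfl fun j _ => step j, Finset.sum_add_distrib, ← ascents_eq_sum]
  congr 1
  have step2 : ∀ j : Fin n, (if j = q ∧ ¬ aP σ j then (1:ℕ) else 0)
      = if j = q then (if ¬ aP σ j then 1 else 0) else 0 := fun j => by
    by_cases h1 : j = q
    · by_cases h2 : aP σ j
      · rw [if_neg (fun h => h.2 h2), if_pos h1, if_neg (fun h => h h2)]
      · rw [if_pos ⟨h1, h2⟩, if_pos h1, if_pos h2]
    · rw [if_neg (fun h => h1 h.1), if_neg h1]
  rw [Finset.sum_congr rfl fun j _ => step2 j, Finset.sum_ite_eq' Finset.univ q]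
  rw [if_pos (Finset.mem_univ q)]
  by_cases h : aP σ q
  · rw [if_neg (fun hh => hh h), if_pos h]
  · rw [if_pos h, if_neg h]

lemma sum_ins {M : Type*} [AddCommMonoid M] (f : Equiv.Perm (Fin (n + 1)) → M) :
    ∑ τ : Equiv.Perm (Fin (n + 1)), f τ
      = ∑ p : Fin (n + 1), ∑ σ : Equiv.Perm (Fin n), f (ins σ p) := by
  have hbij : Function.Bijective
      (fun x : Fin (n + 1) × Equiv.Perm (Fin n) => ins x.2 x.1) := by
    rw [Fintype.bijective_iff_injective_and_card]
    constructor
    · rintro ⟨p, σ⟩ ⟨p', σ'⟩ h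
      simp only at h
      have h1 : ins σ p p' = Fin.last n := by rw [h, ins_self]
      have hp : p' = p := by
        by_contra hne
        exact absurd h1 (ne_of_lt (ins_lt_last σ p hne))
      subst hp
      have hσ : σ = σ' := by
        apply Equiv.ext; intro j
        have h2 : ins σ p' (p'.succAbove j) = ins σ' p' (p'.succAbove j) := by rw [h]
        rw [ins_succAbove, ins_succAbove] at h2
        exact Fin.castSucc_inj.mp h2
      rw [hσ]
    · simp [Fintype.card_perm, Fintype.card_prod, Nat.factorial_succ]
  calc ∑ τ : Equiv.Perm (Fin (n + 1)), f τ
      = ∑ x : Fin (n + 1) × Equiv.Perm (Fin n), f (ins x.2 x.1) :=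
        (Fintype.sum_bijective _ hbij _ _ fun x => rfl).symm
    _ = ∑ p : Fin (n + 1), ∑ σ : Equiv.Perm (Fin n), f (ins σ p) := by
        rw [Fintype.sum_prod_type]

noncomputable def Apoly (n : ℕ) : Polynomial ℚ :=
  ∑ σ : Equiv.Perm (Fin n), Polynomial.X ^ (ascents σ)

lemma ascents_le (σ : Equiv.Perm (Fin n)) : ascents σ ≤ n :=
  le_trans (Finset.card_filter_le _ _) (by simp)

lemma card_filter_aP (σ : Equiv.Perm (Fin n)) :
    (Finset.univ.filter (aP σ)).card = ascents σ := rfl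

lemma sum_pow_ins (σ : Equiv.Perm (Fin n)) :
    ∑ p : Fin (n + 1), (Polynomial.X : Polynomial ℚ) ^ ascents (ins σ p)
      = (ascents σ + 1) • Polynomial.X ^ ascents σ
        + (n - ascents σ) • Polynomial.X ^ (ascents σ + 1) := by
  rw [Fin.sum_univ_succ, ascents_ins_zero]
  have step : ∀ q : Fin n, (Polynomial.X : Polynomial ℚ) ^ ascents (ins σ q.succ)
      = if aP σ q then Polynomial.X ^ ascents σ else Polynomial.X ^ (ascents σ + 1) := by
    intro q; rw [ascents_ins_succ]
    by_cases h : aP σ q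
    · rw [if_pos h, if_pos h, add_zero]
    · rw [if_neg h, if_neg h]
  rw [Finset.sum_congr rfl fun q _ => step q, Finset.sum_ite, Finset.sum_const,
    Finset.sum_const, card_filter_aP]
  have hcard : (Finset.univ.filter (fun q => ¬ aP σ q)).card = n - ascents σ := by
    have h1 := Finset.card_filter_add_card_filter_not
      (s := (Finset.univ : Finset (Fin n))) (p := aP σ)
    rw [card_filter_aP] at h1
    simp only [Finset.card_univ, Fintype.card_fin] at h1
    omega
  rw [hcard, succ_nsmul]
  abel

lemma Apoly_succ (n : ℕ) : Apoly (n + 1)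
    = (1 + Polynomial.C (n : ℚ) * Polynomial.X) * Apoly n
      + Polynomial.X * (1 - Polynomial.X) * Polynomial.derivative (Apoly n) := by
  rw [Apoly, sum_ins (fun τ => (Polynomial.X : Polynomial ℚ) ^ ascents τ), Finset.sum_comm,
    Apoly, Polynomial.derivative_sum, Finset.mul_sum, Finset.mul_sum, ← Finset.sum_add_distrib]
  refine Finset.sum_congr rfl fun σ _ => ?_
  rw [sum_pow_ins σ]
  have ha := ascents_le σ
  cases hA : ascents σ with
  | zero =>
      simp only [pow_zero, Polynomial.derivative_one, mul_zero, add_zero, one_smul,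
        zero_add, pow_one, mul_one]
      rw [nsmul_eq_mul, Nat.sub_zero, Polynomial.C_eq_natCast]
  | succ b =>
      have ha' : b + 1 ≤ n := hA ▸ ha
      rw [Polynomial.derivative_X_pow, nsmul_eq_mul, nsmul_eq_mul, Nat.cast_sub ha',
        Nat.add_sub_cancel, Polynomial.C_eq_natCast, Polynomial.C_eq_natCast]
      push_cast
      ring

noncomputable def Sps (m : ℕ) : PowerSeries ℚ :=
  PowerSeries.mk fun j => ((j + 1 : ℕ) ^ m : ℚ)

lemma coeff_Sps (m j : ℕ) : PowerSeries.coeff (R := ℚ) j (Sps m) = ((j + 1 : ℕ) ^ m : ℚ) := by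
  simp [Sps]

lemma S0 : ((1 : PowerSeries ℚ) - PowerSeries.X) * Sps 0 = 1 := by
  ext j
  rw [sub_mul, one_mul, map_sub]
  cases j with
  | zero => simp [coeff_Sps]
  | succ j => simp [PowerSeries.coeff_succ_X_mul, coeff_Sps, PowerSeries.coeff_one]

lemma S_succ (m : ℕ) :
    Sps (m + 1) = Sps m + PowerSeries.X * (PowerSeries.derivative ℚ (Sps m)) := by
  ext j
  rw [map_add]
  cases j with
  | zero => simp [coeff_Sps]
  | succ j =>
      rw [PowerSeries.coeff_succ_X_mul, PowerSeries.coeff_derivative, coeff_Sps, coeff_Sps]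
      push_cast
      ring

lemma Sid (m : ℕ) :
    PowerSeries.X * ∑ k ∈ Finset.range m, PowerSeries.C (R := ℚ) ((m.choose k : ℚ)) * Sps k
      = ((1 : PowerSeries ℚ) - PowerSeries.X) * Sps m - 1 := by
  ext j
  rw [map_sub, sub_mul, one_mul, map_sub]
  cases j with
  | zero => simp [coeff_Sps, PowerSeries.coeff_one]
  | succ j =>
      rw [PowerSeries.coeff_succ_X_mul, PowerSeries.coeff_succ_X_mul, map_sum]
      simp only [PowerSeries.coeff_C_mul, coeff_Sps, PowerSeries.coeff_one, Nat.succ_ne_zero,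
        if_false, sub_zero]
      have hb := add_pow (x := (j + 1 : ℚ)) (y := 1) m
      rw [Finset.sum_range_succ] at hb
      simp only [one_pow, mul_one, Nat.choose_self, Nat.cast_one] at hb
      have : ((j + 1 : ℚ) + 1) ^ m = ((j + 1 + 1 : ℕ) ^ m : ℚ) := by push_cast; ring
      rw [this] at hb
      have hj : ((j + 1 + 1 : ℕ) ^ m : ℚ) - ((j + 1 : ℕ) ^ m : ℚ)
          = ∑ k ∈ Finset.range m, (j + 1 : ℚ) ^ k * (m.choose k : ℚ) := by
        push_cast at hb ⊢
        linarith [hb]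
      rw [hj]
      exact Finset.sum_congr rfl fun k _ => by push_cast; ring

lemma Aps_eq (m : ℕ) :
    ((Apoly m : Polynomial ℚ) : PowerSeries ℚ)
      = ((1 : PowerSeries ℚ) - PowerSeries.X) ^ (m + 1) * Sps m := by
  induction m with
  | zero =>
      have h1 : Apoly 0 = 1 := by
        rw [Apoly]
        have h2 : ∀ σ : Equiv.Perm (Fin 0), (Polynomial.X : Polynomial ℚ) ^ ascents σ = 1 := by
          intro σ
          have : ascents σ = 0 := by simp [ascents]
          rw [this, pow_zero]
        rw [Finset.sum_congr rfl fun σ _ => h2 σ, Finset.sum_const, Finset.card_univ,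
          Fintype.card_perm]
        simp
      rw [h1, Polynomial.coe_one, pow_one]
      exact S0.symm
  | succ m ih =>
      rw [Apoly_succ]
      simp only [Polynomial.coe_add, Polynomial.coe_mul, Polynomial.coe_one, Polynomial.coe_X,
        Polynomial.coe_C, Polynomial.coe_sub]
      rw [← PowerSeries.derivative_coe, ih, S_succ m]
      rw [Derivation.leibniz, Derivation.leibniz_pow]
      have hd : (PowerSeries.derivative ℚ) ((1 : PowerSeries ℚ) - PowerSeries.X) = -1 := by
        rw [map_sub]
        simp
      rw [hd, Nat.add_sub_cancel]
      simp only [smul_eq_mul, nsmul_eq_mul, pow_succ, map_natCast]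
      push_cast
      ring

lemma Lpoly_one : Lpoly 1 = Polynomial.C (1 / 2) * (Polynomial.X + 1) := rfl

lemma Lpoly_two_add (b : ℕ) :
    Lpoly (b + 2) = ∑ ν ∈ Finset.Icc 1 (b + 1), Polynomial.C (lam (b + 2) ν) * Polynomial.X ^ ν :=
  rfl

lemma ascents_lt {n : ℕ} (σ : Equiv.Perm (Fin (n + 1))) : ascents σ < n + 1 := by
  have hsub : (Finset.univ.filter fun i : Fin (n+1) =>
      ∃ h : (i : ℕ) + 1 < n + 1, σ i < σ ⟨(i : ℕ) + 1, h⟩)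
      ⊆ Finset.univ.erase (Fin.last n) := by
    intro i hi
    rw [Finset.mem_filter] at hi
    obtain ⟨-, h, -⟩ := hi
    refine Finset.mem_erase.mpr ⟨?_, Finset.mem_univ _⟩
    intro hh
    rw [hh] at h
    simp at h
  calc ascents σ ≤ (Finset.univ.erase (Fin.last n)).card := Finset.card_le_card hsub
    _ = n := by rw [Finset.card_erase_of_mem (Finset.mem_univ _)]; simp
    _ < n + 1 := Nat.lt_succ_self n

lemma Apoly_group (n : ℕ) : Apoly (n + 1)
    = ∑ k ∈ Finset.range (n + 1),
        ((Finset.univ.filter fun σ : Equiv.Perm (Fin (n + 1)) => ascents σ = k).card)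
          • (Polynomial.X : Polynomial ℚ) ^ k := by
  rw [Apoly, ← Finset.sum_fiberwise_of_maps_to (g := ascents)
    (t := Finset.range (n + 1)) (fun σ _ => Finset.mem_range.mpr (ascents_lt σ))]
  refine Finset.sum_congr rfl fun k _ => ?_
  rw [Finset.sum_congr rfl (fun σ hσ => by
    rw [(Finset.mem_filter.mp hσ).2]), Finset.sum_const]

lemma Lpoly_eq (b : ℕ) :
    Lpoly (b + 2) = Polynomial.C (1 / ((b + 1).factorial : ℚ)) * (Polynomial.X * Apoly (b + 1)) := by
  rw [Lpoly_two_add, Apoly_group, Finset.mul_sum, Finset.mul_sum]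
  refine Finset.sum_nbij' (i := fun ν => ν - 1) (j := fun k => k + 1) ?_ ?_ ?_ ?_ ?_
  · intro ν hν
    rw [Finset.mem_Icc] at hν
    rw [Finset.mem_range]
    omega
  · intro k hk
    rw [Finset.mem_range] at hk
    rw [Finset.mem_Icc]
    omega
  · intro ν hν
    rw [Finset.mem_Icc] at hν
    omega
  · intro k _
    omega
  · intro ν hν
    rw [Finset.mem_Icc] at hν
    obtain ⟨h1, h2⟩ := hν
    obtain ⟨w, rfl⟩ : ∃ w, ν = w + 1 := ⟨ν - 1, by omega⟩
    have hw : w + 1 - 1 = w := by omega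
    rw [hw]
    have hlam : lam (b + 2) (w + 1)
        = ((Finset.univ.filter fun σ : Equiv.Perm (Fin (b + 1)) => ascents σ = w).card : ℚ)
          / ((b + 1).factorial : ℚ) := rfl
    rw [hlam, nsmul_eq_mul, ← Polynomial.C_eq_natCast, div_eq_mul_inv, one_div, map_mul]
    ring

lemma Lps (b : ℕ) : ((Lpoly (b + 2) : Polynomial ℚ) : PowerSeries ℚ)
    = PowerSeries.C (R := ℚ) (1 / ((b + 1).factorial : ℚ))
        * (PowerSeries.X * (((1 : PowerSeries ℚ) - PowerSeries.X) ^ (b + 2) * Sps (b + 1))) := by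
  rw [Lpoly_eq, Polynomial.coe_mul, Polynomial.coe_mul, Polynomial.coe_C, Polynomial.coe_X,
    Aps_eq]

lemma Lps1 : ((Lpoly 1 : Polynomial ℚ) : PowerSeries ℚ)
    = PowerSeries.C (R := ℚ) (1 / 2) * (PowerSeries.X + 1) := by
  rw [Lpoly_one, Polynomial.coe_mul, Polynomial.coe_C, Polynomial.coe_add, Polynomial.coe_X,
    Polynomial.coe_one]

/-- The closed form `L(X,Y) = ((1−X)/2)·(1 + X·e^{(1−X)Y})/(1 − X·e^{(1−X)Y})`, stated
as the equivalent identity of formal power series obtained by multiplying both sides by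
`1 − X·e^{(1−X)Y}` (whose constant term `1 − X` is a non-zero-divisor). -/
theorem Lser2_closed_form :
    Lser2 * (1 - Xv * expOneSubXY) =
      PowerSeries.C (R := PowerSeries ℚ) (PowerSeries.C (R := ℚ) (1 / 2)) * (1 - Xv) *
        (1 + Xv * expOneSubXY) := by
  have hXe : ∀ b : ℕ, (PowerSeries.coeff (R := PowerSeries ℚ) b) (Xv * expOneSubXY)
      = PowerSeries.X * (((1 : PowerSeries ℚ) - PowerSeries.X) ^ b
          * PowerSeries.C (R := ℚ) (1 / (b.factorial : ℚ))) := by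
    intro b
    rw [Xv, PowerSeries.coeff_C_mul, expOneSubXY, PowerSeries.coeff_mk]
  have hRc : PowerSeries.C (R := PowerSeries ℚ) (PowerSeries.C (R := ℚ) (1 / 2)) * (1 - Xv)
      = PowerSeries.C (R := PowerSeries ℚ) (PowerSeries.C (R := ℚ) (1 / 2)
          * ((1 : PowerSeries ℚ) - PowerSeries.X)) := by
    rw [map_mul, map_sub, map_one, Xv]
  refine PowerSeries.ext fun m => ?_
  rw [PowerSeries.coeff_mul, Finset.Nat.sum_antidiagonal_eq_sum_range_succ_mk, hRc,
    PowerSeries.coeff_C_mul, map_add, PowerSeries.coeff_one, hXe m]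
  have hsummand : ∀ k, (PowerSeries.coeff (R := PowerSeries ℚ) k) Lser2
      = ((Lpoly (k + 1) : Polynomial ℚ) : PowerSeries ℚ) := fun k => by
    rw [Lser2, PowerSeries.coeff_mk]
  have hfac : ∀ b : ℕ, (PowerSeries.coeff (R := PowerSeries ℚ) b) (1 - Xv * expOneSubXY)
      = (if b = 0 then 1 else 0)
        - PowerSeries.X * (((1 : PowerSeries ℚ) - PowerSeries.X) ^ b
            * PowerSeries.C (R := ℚ) (1 / (b.factorial : ℚ))) := by
    intro b
    rw [map_sub, PowerSeries.coeff_one, hXe b]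
  simp only [hsummand, hfac]
  cases m with
  | zero =>
      rw [Finset.sum_range_one, Lps1]
      norm_num
      ring
  | succ M =>
      rw [if_neg (Nat.succ_ne_zero M)]
      rw [Finset.sum_range_succ']
      rw [Finset.sum_range_succ]
      have e1 : M + 1 - (M + 1) = 0 := by omega
      rw [e1]
      have hmid : ∀ x ∈ Finset.range M,
          ((Lpoly (x + 1 + 1) : Polynomial ℚ) : PowerSeries ℚ) *
            ((if M + 1 - (x + 1) = 0 then 1 else 0) -
              PowerSeries.X * (((1 : PowerSeries ℚ) - PowerSeries.X) ^ (M + 1 - (x + 1))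
                * PowerSeries.C (R := ℚ) (1 / ((M + 1 - (x + 1)).factorial : ℚ))))
          = -(PowerSeries.X ^ 2 * ((1 : PowerSeries ℚ) - PowerSeries.X) ^ (M + 2)
              * PowerSeries.C (R := ℚ) (1 / (((M + 1).factorial : ℚ))))
              * (PowerSeries.C (R := ℚ) (((M + 1).choose (x + 1) : ℚ)) * Sps (x + 1)) := by
        intro x hx
        have hx' : x < M := Finset.mem_range.mp hx
        have hb : M + 1 - (x + 1) = M - x := by omega
        have hb0 : ¬ (M - x = 0) := by omega
        have hxx : x + 1 + 1 = x + 2 := rfl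
        rw [hxx, Lps x, hb, if_neg hb0]
        have hpow : ((1 : PowerSeries ℚ) - PowerSeries.X) ^ (M + 2)
            = ((1 : PowerSeries ℚ) - PowerSeries.X) ^ (x + 2)
              * ((1 : PowerSeries ℚ) - PowerSeries.X) ^ (M - x) := by
          rw [← pow_add]; congr 1; omega
        rw [hpow]
        have hC : (1 / ((x + 1).factorial : ℚ)) * (1 / (((M - x).factorial : ℚ)))
            = (1 / (((M + 1).factorial : ℚ))) * (((M + 1).choose (x + 1) : ℕ) : ℚ) := by
          rw [Nat.cast_choose ℚ (by omega : x + 1 ≤ M + 1)]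
          have hmx : M + 1 - (x + 1) = M - x := by omega
          rw [hmx]
          have f1 : ((x + 1).factorial : ℚ) ≠ 0 := Nat.cast_ne_zero.mpr (Nat.factorial_ne_zero _)
          have f2 : (((M - x)).factorial : ℚ) ≠ 0 := Nat.cast_ne_zero.mpr (Nat.factorial_ne_zero _)
          have f3 : (((M + 1)).factorial : ℚ) ≠ 0 := Nat.cast_ne_zero.mpr (Nat.factorial_ne_zero _)
          field_simp
        have hCC := congrArg (PowerSeries.C (R := ℚ)) hC
        rw [map_mul, map_mul] at hCC
        linear_combination (-(PowerSeries.X ^ 2 * ((1 : PowerSeries ℚ) - PowerSeries.X) ^ (x + 2)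
          * ((1 : PowerSeries ℚ) - PowerSeries.X) ^ (M - x) * Sps (x + 1))) * hCC
      rw [Finset.sum_congr rfl hmid, ← Finset.mul_sum]
      have hshift := Finset.sum_range_succ'
        (fun k => PowerSeries.C (R := ℚ) (((M + 1).choose k : ℚ)) * Sps k) M
      simp only [Nat.choose_zero_right, Nat.cast_one, map_one, one_mul] at hshift
      have hmid2 : (∑ i ∈ Finset.range M,
            PowerSeries.C (R := ℚ) (((M + 1).choose (i + 1) : ℚ)) * Sps (i + 1))
          = (∑ k ∈ Finset.range (M + 1), PowerSeries.C (R := ℚ) (((M + 1).choose k : ℚ)) * Sps k)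
            - Sps 0 := by
        rw [hshift]; ring
      rw [hmid2]
      have hL2 : M + 1 + 1 = M + 2 := rfl
      rw [hL2, Lps M]
      have hz : (0 : ℕ) + 1 = 1 := rfl
      rw [hz, Lps1]
      rw [if_neg (by omega : ¬ (M + 1 - 0 = 0))]
      have hz2 : M + 1 - 0 = M + 1 := rfl
      rw [hz2]
      simp only [pow_zero, Nat.factorial_zero, Nat.cast_one, one_mul, mul_one, if_pos rfl]
      norm_num
      have hSid := Sid (M + 1)
      have hS0 := S0
      have hhalf : (PowerSeries.C (R := ℚ)) (1 / 2 : ℚ) * 2 = 1 := by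
        rw [← map_ofNat (PowerSeries.C (R := ℚ)) 2, ← map_mul]
        norm_num
      simp only [map_natCast] at hSid
      linear_combination
        (-(PowerSeries.X * ((1 : PowerSeries ℚ) - PowerSeries.X) ^ (M + 2)
            * PowerSeries.C (R := ℚ) (((M + 1).factorial : ℚ))⁻¹)) * hSid
        + (PowerSeries.X ^ 2 * ((1 : PowerSeries ℚ) - PowerSeries.X) ^ (M + 1)
            * PowerSeries.C (R := ℚ) (((M + 1).factorial : ℚ))⁻¹) * hS0
        + (-(PowerSeries.X * ((1 : PowerSeries ℚ) - PowerSeries.X) ^ (M + 1)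
            * PowerSeries.C (R := ℚ) (((M + 1).factorial : ℚ))⁻¹)) * hhalf
end
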